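/- Let ρ ≥ 0, 0 < δ ≤ 1, and n ≥ 3. For integers ℓ with δn ≤ ℓ ≤ n, one has n²·ν_{n,ℓ} ≤ c, where ν_{n,ℓ} := ℓ(ℓ+ρ)μ_{n,ℓ}/(n(1-μ_{n,ℓ})), μ_{n,ℓ} := (n!/(n-ℓ)!)·Γ(n+ρ+1)/Γ(n+ℓ+ρ+1), and c is a constant depending only on ρ and δ (not on n or ℓ). -/

import Mathlib

noncomputable def mu (ρ : ℝ) (n ℓ : ℕ) : ℝ :=
  ((Nat.factorial n : ℝ) / (Nat.factorial (n - ℓ) : ℝ)) *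
    (Real.Gamma ((n : ℝ) + ρ + 1) / Real.Gamma ((n : ℝ) + (ℓ : ℝ) + ρ + 1))

noncomputable def nu (ρ : ℝ) (n ℓ : ℕ) : ℝ :=
  ((ℓ : ℝ) * ((ℓ : ℝ) + ρ) * mu ρ n ℓ) / ((n : ℝ) * (1 - mu ρ n ℓ))

open Finset

lemma gamma_add_nat (x : ℝ) (hx : 0 < x) (k : ℕ) :
    Real.Gamma (x + k) = Real.Gamma x * ∏ i ∈ range k, (x + i) := by
  induction k with
  | zero => simp
  | succ k ih =>
    have hxk : (0:ℝ) < x + k := by positivity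
    have h : x + (k + 1 : ℕ) = (x + k) + 1 := by push_cast; ring
    rw [h, Real.Gamma_add_one hxk.ne', ih, prod_range_succ]
    ring

lemma factorial_add_prod (m ℓ : ℕ) :
    ((m + ℓ).factorial : ℝ) = m.factorial * ∏ i ∈ range ℓ, ((m : ℝ) + 1 + i) := by
  induction ℓ with
  | zero => simp
  | succ ℓ ih =>
    have h : m + (ℓ + 1) = (m + ℓ) + 1 := by ring
    rw [h, Nat.factorial_succ, prod_range_succ]
    push_cast
    rw [ih]
    ring

lemma mu_eq_prod (ρ : ℝ) (hρ : 0 ≤ ρ) (n ℓ : ℕ) (hℓn : ℓ ≤ n) :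
    mu ρ n ℓ = ∏ i ∈ range ℓ, (((n - ℓ : ℕ) : ℝ) + 1 + i) / ((n : ℝ) + ρ + 1 + i) := by
  set m := n - ℓ with hm
  have hnm : n = m + ℓ := by omega
  have hx : (0:ℝ) < (n : ℝ) + ρ + 1 := by positivity
  have hΓ : (0:ℝ) < Real.Gamma ((n : ℝ) + ρ + 1) := Real.Gamma_pos_of_pos hx
  have hfac : ((n : ℝ)) + (ℓ : ℝ) + ρ + 1 = ((n : ℝ) + ρ + 1) + (ℓ : ℕ) := by push_cast; ring
  have hnum : (n.factorial : ℝ) = m.factorial * ∏ i ∈ range ℓ, ((m : ℝ) + 1 + i) := by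
    rw [hnm]; exact factorial_add_prod m ℓ
  have hden := gamma_add_nat ((n : ℝ) + ρ + 1) hx ℓ
  have hprodpos : (0:ℝ) < ∏ i ∈ range ℓ, ((n : ℝ) + ρ + 1 + i) := by
    apply prod_pos; intro i _; positivity
  rw [mu, hfac, hden, hnum, prod_div_distrib]
  have hmf : ((m.factorial : ℝ)) ≠ 0 := by positivity
  field_simp
  ring

lemma mu_nonneg (ρ : ℝ) (hρ : 0 ≤ ρ) (n ℓ : ℕ) (hℓn : ℓ ≤ n) : 0 ≤ mu ρ n ℓ := by
  rw [mu_eq_prod ρ hρ n ℓ hℓn]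
  apply prod_nonneg; intro i _
  positivity

lemma mu_le_pow (ρ : ℝ) (hρ : 0 ≤ ρ) (n ℓ : ℕ) (hℓn : ℓ ≤ n) (hℓ : 1 ≤ ℓ) :
    mu ρ n ℓ ≤ ((n : ℝ) / ((n : ℝ) + ℓ)) ^ ℓ := by
  have hn1 : 1 ≤ n := le_trans hℓ hℓn
  have hnpos : (1:ℝ) ≤ (n:ℝ) := by exact_mod_cast hn1
  have hnl : (0:ℝ) < (n : ℝ) + ℓ := by positivity
  rw [mu_eq_prod ρ hρ n ℓ hℓn]
  calc ∏ i ∈ range ℓ, (((n - ℓ : ℕ) : ℝ) + 1 + i) / ((n : ℝ) + ρ + 1 + i)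
      ≤ ∏ _i ∈ range ℓ, ((n : ℝ) / ((n : ℝ) + ℓ)) := ?_
    _ = ((n : ℝ) / ((n : ℝ) + ℓ)) ^ ℓ := by rw [prod_const, card_range]
  apply prod_le_prod
  · intro i _; positivity
  · intro i hi
    rw [mem_range] at hi
    have hcast : ((n - ℓ : ℕ) : ℝ) = (n : ℝ) - ℓ := by
      exact Nat.cast_sub hℓn
    rw [hcast, div_le_div_iff₀ (by positivity) hnl]
    have hi' : (i : ℝ) + 1 ≤ (ℓ : ℝ) := by exact_mod_cast hi
    have hℓ' : (1:ℝ) ≤ (ℓ:ℝ) := by exact_mod_cast hℓ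
    have hn' : (0:ℝ) ≤ (n:ℝ) := Nat.cast_nonneg n
    nlinarith [mul_nonneg hn' hρ, mul_nonneg (sub_nonneg.mpr hi') (by linarith : (0:ℝ) ≤ (ℓ:ℝ))]

set_option maxHeartbeats 1000000 in
theorem nsq_nu_bounded (ρ : ℝ) (hρ : 0 ≤ ρ) (δ : ℝ) (h1 : 0 < δ) (h2 : δ ≤ 1) :
    ∃ c : ℝ, ∀ n : ℕ, 3 ≤ n → ∀ ℓ : ℕ, δ * (n : ℝ) ≤ (ℓ : ℝ) → ℓ ≤ n →
      (n : ℝ) ^ 2 * nu ρ n ℓ ≤ c := by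
  set b := Real.log (1 + δ) with hbdef
  have hb : 0 < b := Real.log_pos (by linarith)
  refine ⟨27 * (1 + ρ) * (1 + δ) / (δ ^ 2 * b ^ 3), ?_⟩
  intro n hn ℓ hδn hℓn
  have hnpos : (0:ℝ) < n := by
    have : 0 < n := by omega
    exact_mod_cast this
  have hℓ1 : 1 ≤ ℓ := by
    by_contra h
    push_neg at h
    interval_cases ℓ
    · simp at hδn; nlinarith
  have hℓpos : (0:ℝ) < ℓ := by exact_mod_cast hℓ1
  set Q : ℝ := 1 / (1 + δ) with hQdef
  have hQ0 : 0 < Q := by positivity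
  have hQ1 : Q < 1 := by rw [hQdef, div_lt_one (by linarith)]; linarith
  -- mu ≤ Q ^ ℓ
  have hbase : (n : ℝ) / ((n : ℝ) + ℓ) ≤ Q := by
    rw [hQdef, div_le_div_iff₀ (by positivity) (by linarith)]
    nlinarith
  have hmuQ : mu ρ n ℓ ≤ Q ^ ℓ := by
    refine le_trans (mu_le_pow ρ hρ n ℓ hℓn hℓ1) ?_
    exact pow_le_pow_left₀ (by positivity) hbase ℓ
  have hmu0 : 0 ≤ mu ρ n ℓ := mu_nonneg ρ hρ n ℓ hℓn
  have hmuQ1 : mu ρ n ℓ ≤ Q := by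
    refine le_trans hmuQ ?_
    calc Q ^ ℓ ≤ Q ^ 1 := pow_le_pow_of_le_one hQ0.le hQ1.le hℓ1
    _ = Q := pow_one Q
  have h1mu : 1 - Q ≤ 1 - mu ρ n ℓ := by linarith
  have h1Qpos : 0 < 1 - Q := by linarith
  -- exponential bound: Q ^ ℓ ≤ 27 / (b * ℓ) ^ 3
  have hblpos : (0:ℝ) < b * ℓ := by positivity
  have hexp : ((b * ℓ) ^ 3) / 27 ≤ (1 + δ) ^ ℓ := by
    have h1 : 1 + (ℓ : ℝ) * b / 3 ≤ Real.exp ((ℓ : ℝ) * b / 3) := by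
      have := Real.add_one_le_exp ((ℓ : ℝ) * b / 3); linarith
    have h2 : ((ℓ : ℝ) * b / 3) ^ 3 ≤ (Real.exp ((ℓ : ℝ) * b / 3)) ^ 3 := by
      apply pow_le_pow_left₀ (by positivity) (le_trans (by nlinarith) h1)
    have h3 : (Real.exp ((ℓ : ℝ) * b / 3)) ^ 3 = Real.exp ((ℓ : ℝ) * b) := by
      rw [← Real.exp_nat_mul]; norm_num; ring_nf
    have h4 : Real.exp ((ℓ : ℝ) * b) = (1 + δ) ^ ℓ := by
      rw [Real.exp_nat_mul, Real.exp_log (by linarith)]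
    calc ((b * ℓ) ^ 3) / 27 = ((ℓ : ℝ) * b / 3) ^ 3 := by ring
    _ ≤ (Real.exp ((ℓ : ℝ) * b / 3)) ^ 3 := h2
    _ = (1 + δ) ^ ℓ := by rw [h3, h4]
  have hQpow : Q ^ ℓ ≤ 27 / (b * ℓ) ^ 3 := by
    have hpos : (0:ℝ) < (b * ℓ) ^ 3 / 27 := by positivity
    have : Q ^ ℓ = 1 / (1 + δ) ^ ℓ := by rw [hQdef, one_div, one_div, inv_pow]
    rw [this]
    rw [div_le_div_iff₀ (by positivity) (by positivity)]
    nlinarith [pow_pos (show (0:ℝ) < 1 + δ by linarith) ℓ]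
  have hmu27 : mu ρ n ℓ ≤ 27 / (b ^ 3 * (ℓ:ℝ) ^ 3) := by
    refine le_trans hmuQ (le_trans hQpow ?_)
    rw [mul_pow]
  -- main bound
  have hD : 0 < (n : ℝ) * (1 - mu ρ n ℓ) := by
    apply mul_pos hnpos; linarith
  have key : (n : ℝ) * ((ℓ : ℝ) * ((ℓ : ℝ) + ρ) * mu ρ n ℓ) ≤ 27 * (1 + ρ) / (δ * b ^ 3) := by
    have hnle : (n : ℝ) ≤ (ℓ : ℝ) / δ := by
      rw [le_div_iff₀ h1]; nlinarith [hδn]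
    have hℓ1' : (1:ℝ) ≤ (ℓ:ℝ) := by exact_mod_cast hℓ1
    have hℓρ : (ℓ : ℝ) + ρ ≤ (ℓ : ℝ) * (1 + ρ) := by nlinarith [mul_nonneg (sub_nonneg.mpr hℓ1') hρ]
    calc (n : ℝ) * ((ℓ : ℝ) * ((ℓ : ℝ) + ρ) * mu ρ n ℓ)
        ≤ ((ℓ : ℝ) / δ) * ((ℓ : ℝ) * ((ℓ : ℝ) * (1 + ρ)) * (27 / (b ^ 3 * (ℓ:ℝ) ^ 3))) := by
          gcongr
      _ = 27 * (1 + ρ) / (δ * b ^ 3) := by field_simp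
  have keynn : (0:ℝ) ≤ (n : ℝ) * ((ℓ : ℝ) * ((ℓ : ℝ) + ρ) * mu ρ n ℓ) := by positivity
  have step1 : (n : ℝ) ^ 2 * nu ρ n ℓ
      = (n : ℝ) * ((ℓ : ℝ) * ((ℓ : ℝ) + ρ) * mu ρ n ℓ) / (1 - mu ρ n ℓ) := by
    have hne : 1 - mu ρ n ℓ ≠ 0 := by linarith
    rw [nu]
    field_simp
  rw [step1]
  have step2 : (n : ℝ) * ((ℓ : ℝ) * ((ℓ : ℝ) + ρ) * mu ρ n ℓ) / (1 - mu ρ n ℓ)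
      ≤ (27 * (1 + ρ) / (δ * b ^ 3)) / (1 - Q) := by
    apply div_le_div₀ (by positivity) key h1Qpos h1mu
  refine le_trans step2 (le_of_eq ?_)
  have h1Q : 1 - Q = δ / (1 + δ) := by
    rw [hQdef]; field_simp; ring
  rw [h1Q]
  field_simp
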